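/- Let H be a graded connected Hopf algebra over ℂ and let φ ∈ G_A be a local character. Then tildeβ_φ, defined by tildeβ_φ(x) = (d/dt)|_{t=0}(φ^{-1}⋆φ^t)(x), is (i) an infinitesimal character: tildeβ_φ ∈ g_A, and (ii) holomorphic: tildeβ_φ(x) ∈ A_+ = ℂ[[λ]] for every x ∈ H. -/

import Mathlib

open scoped TensorProduct

set_option synthInstance.maxHeartbeats 1000000
set_option maxHeartbeats 1600000
set_option linter.unnecessarySeqFocus false

noncomputable section

/-- The algebra `A = ℂ((λ))` of formal Laurent series with finite pole part. -/
abbrev LS := LaurentSeries ℂ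

/-- `ℂ`-scalars commute with multiplication of Laurent series. -/
instance : SMulCommClass ℂ LS LS := by
  constructor
  intro c a b
  show c • (a * b) = a * (c • b)
  rw [← HahnSeries.single_zero_mul_eq_smul, ← HahnSeries.single_zero_mul_eq_smul]
  ring

/-- Scalar tower for `ℂ`-scalars and Laurent series. -/
instance : IsScalarTower ℂ LS LS := by
  constructor
  intro c a b
  show (c • a) * b = c • (a * b)
  rw [← HahnSeries.single_zero_mul_eq_smul, ← HahnSeries.single_zero_mul_eq_smul]
  ring

/-- `A₊ = ℂ[[λ]]`: the holomorphic part. -/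
def Aplus (f : LS) : Prop := ∀ n : ℤ, n < 0 → f.coeff n = 0

/-- `A₋ = λ⁻¹ℂ[λ⁻¹]`: the polar part. -/
def Aminus (f : LS) : Prop := ∀ n : ℤ, 0 ≤ n → f.coeff n = 0

/-- The formal variable `λ`. -/
def lam : LS := HahnSeries.single (1 : ℤ) (1 : ℂ)

/-- `λ^k` for `k : ℤ`. -/
def lamZ (k : ℤ) : LS := HahnSeries.single k (1 : ℂ)

/-- `e^{cλ} = Σ_k c^k λ^k / k!` as a Laurent series. -/
def expL (c : ℂ) : LS :=
  HahnSeries.ofPowerSeries ℤ ℂ (PowerSeries.mk fun k => c ^ k / (k.factorial : ℂ))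

section Hopf

variable {H : Type} [Ring H] [HopfAlgebra ℂ H]

/-- Convolution product of linear maps from a Hopf algebra to `A`. -/
def conv (f g : H →ₗ[ℂ] LS) : H →ₗ[ℂ] LS :=
  LinearMap.mul' ℂ LS ∘ₗ TensorProduct.map f g ∘ₗ Coalgebra.comul

/-- The unit `ε` of the convolution algebra. -/
def epsA : H →ₗ[ℂ] LS := LinearMap.toSpanSingleton ℂ LS 1 ∘ₗ Coalgebra.counit

/-- Characters: algebra morphisms `H → A` sending `1` to `1`. -/
def IsCharacter (φ : H →ₗ[ℂ] LS) : Prop :=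
  φ 1 = 1 ∧ ∀ x y : H, φ (x * y) = φ x * φ y

/-- The group inverse of a character: `φ⁻¹ = φ ∘ S`. -/
def charInv (φ : H →ₗ[ℂ] LS) : H →ₗ[ℂ] LS := φ ∘ₗ HopfAlgebra.antipode (R := ℂ)

/-- Infinitesimal characters: `Z(xy) = Z(x)ε(y) + ε(x)Z(y)`. -/
def IsInfChar (Z : H →ₗ[ℂ] LS) : Prop :=
  ∀ x y : H, Z (x * y) = Z x * epsA y + epsA x * Z y

/-- The Lie bracket `[Z,Z'] = Z⋆Z' − Z'⋆Z` on infinitesimal characters. -/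
def lieBr (Z W : H →ₗ[ℂ] LS) : H →ₗ[ℂ] LS := conv Z W - conv W Z

/-- The adjoint action `Ad(g)L = g⋆L⋆g⁻¹`. -/
def Adc (g L : H →ₗ[ℂ] LS) : H →ₗ[ℂ] LS := conv g (conv L (charInv g))

/-- Convolution powers `Z^{⋆k}`. -/
def convPow (Z : H →ₗ[ℂ] LS) : ℕ → (H →ₗ[ℂ] LS)
  | 0 => epsA
  | k + 1 => conv Z (convPow Z k)

/-- `E = exp(Z)`, the convolution exponential: for each `x ∈ H` the series
`Σ_k Z^{⋆k}(x)/k!` stabilizes (a finite sum by connectedness) with value `E(x)`. -/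
def IsConvExp (Z E : H →ₗ[ℂ] LS) : Prop :=
  ∀ x : H, ∃ N : ℕ, ∀ M : ℕ, N ≤ M →
    E x = ∑ k ∈ Finset.range M, ((k.factorial : ℂ))⁻¹ • convPow Z k x

/- ℂ-valued (scalar) versions, for `β`-functions. -/

/-- Convolution product of ℂ-valued linear maps on a Hopf algebra. -/
def convC (f g : H →ₗ[ℂ] ℂ) : H →ₗ[ℂ] ℂ :=
  LinearMap.mul' ℂ ℂ ∘ₗ TensorProduct.map f g ∘ₗ Coalgebra.comul

/-- ℂ-valued characters. -/
def IsCharacterC (φ : H →ₗ[ℂ] ℂ) : Prop :=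
  φ 1 = 1 ∧ ∀ x y : H, φ (x * y) = φ x * φ y

/-- The group inverse of a ℂ-valued character. -/
def charInvC (φ : H →ₗ[ℂ] ℂ) : H →ₗ[ℂ] ℂ := φ ∘ₗ HopfAlgebra.antipode (R := ℂ)

/-- ℂ-valued infinitesimal characters. -/
def IsInfCharC (Z : H →ₗ[ℂ] ℂ) : Prop :=
  ∀ x y : H, Z (x * y) = Z x * Coalgebra.counit y + Coalgebra.counit x * Z y

end Hopf

section Graded

variable {H : Type} [Ring H] [HopfAlgebra ℂ H]
variable (𝒜 : ℕ → Submodule ℂ H) [GradedAlgebra 𝒜]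

/-- Connectedness: `H₀ = ℂ·1`. -/
def IsConnectedGrading : Prop := 𝒜 0 = Submodule.span ℂ {(1 : H)}

/-- The coproduct is grading-preserving: `Δ(H_n) ⊆ Σ_{i+j=n} H_i ⊗ H_j`. -/
def ComulGraded : Prop :=
  ∀ n : ℕ, ∀ x ∈ 𝒜 n, Coalgebra.comul (R := ℂ) x ∈
    ⨆ p : {p : ℕ × ℕ // p.1 + p.2 = n},
      LinearMap.range (TensorProduct.map ((𝒜 p.1.1).subtype) ((𝒜 p.1.2).subtype))

/-- The counit is grading-preserving: it vanishes in positive degrees. -/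
def CounitGraded : Prop := ∀ n : ℕ, 0 < n → ∀ x ∈ 𝒜 n, Coalgebra.counit (R := ℂ) x = 0

/-- The antipode is grading-preserving. -/
def AntipodeGraded : Prop := ∀ n : ℕ, ∀ x ∈ 𝒜 n, HopfAlgebra.antipode (R := ℂ) x ∈ 𝒜 n

/-- The grading biderivation `Y(x) = n·x` for `x ∈ H_n`. -/
def Ymap : H →ₗ[ℂ] H :=
  (DFinsupp.lsum ℕ fun n : ℕ => ((n : ℂ) • (𝒜 n).subtype)) ∘ₗ
    (DirectSum.decomposeLinearEquiv 𝒜).toLinearMap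

/-- `φ^t`, defined by `φ^t(x) = e^{tλn}·φ(x)` for homogeneous `x` of degree `n`. -/
def charScale (t : ℂ) (φ : H →ₗ[ℂ] LS) : H →ₗ[ℂ] LS :=
  (DFinsupp.lsum ℕ fun n : ℕ => (expL (t * (n : ℂ)) • (φ ∘ₗ (𝒜 n).subtype))) ∘ₗ
    (DirectSum.decomposeLinearEquiv 𝒜).toLinearMap

/-- `R̃(φ) = φ^{-1} ⋆ (φ ∘ Y)`. -/
def Rtilde (φ : H →ₗ[ℂ] LS) : H →ₗ[ℂ] LS := conv (charInv φ) (φ ∘ₗ Ymap 𝒜)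

/-- `(φm, φp)` is the Birkhoff decomposition of `φ`: `φ = φm^{-1} ⋆ φp`, i.e. `φm ⋆ φ = φp`,
with `φp` holomorphic and `φm − ε` a pure pole part. -/
def IsBirkhoff (φ φm φp : H →ₗ[ℂ] LS) : Prop :=
  IsCharacter φm ∧ IsCharacter φp ∧ (∀ x, Aplus (φp x)) ∧
    (∀ x, Aminus (φm x - epsA x)) ∧ conv φm φ = φp

/-- A character is local if the negative Birkhoff part of `φ^t` is independent of `t`. -/
def IsLocal (φ : H →ₗ[ℂ] LS) : Prop :=
  IsCharacter φ ∧ ∃ φm : H →ₗ[ℂ] LS, ∀ t : ℂ, ∃ φp, IsBirkhoff (charScale 𝒜 t φ) φm φp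

/-- `B = tildeβ_φ`:  `B(x) = (d/dt)|_{t=0} (φ^{-1} ⋆ φ^t)(x)`, coefficientwise. -/
def HasTildeBeta (φ B : H →ₗ[ℂ] LS) : Prop :=
  ∀ (x : H) (n : ℤ),
    HasDerivAt (fun t : ℂ => ((conv (charInv φ) (charScale 𝒜 t φ)) x).coeff n)
      ((B x).coeff n) 0

/-- The `β`-function `β_φ = −(Res φ₋) ∘ Y` of a local character whose negative
Birkhoff part is `φm`. -/
def betaFn (φm : H →ₗ[ℂ] LS) : H → ℂ := fun x => -((φm (Ymap 𝒜 x)).coeff (-1))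

end Graded

section Curves

variable {H : Type} [Ring H] [HopfAlgebra ℂ H]

/-- Pointwise (coefficientwise) derivative of a curve of maps `H → A`. -/
def HasDerivAtF (F : ℝ → (H →ₗ[ℂ] LS)) (F' : H →ₗ[ℂ] LS) (t : ℝ) : Prop :=
  ∀ (x : H) (n : ℤ), HasDerivAt (fun s : ℝ => ((F s) x).coeff n) ((F' x).coeff n) t

/-- Pointwise differentiability of a curve of maps `H → A`. -/
def PointwiseDifferentiable (F : ℝ → (H →ₗ[ℂ] LS)) : Prop :=
  ∀ (x : H) (n : ℤ), Differentiable ℝ (fun s : ℝ => ((F s) x).coeff n)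

end Curves

/-- The operator `R = P₊ − P₋` on Laurent series. -/
def Rop : LS →ₗ[ℂ] LS where
  toFun f :=
    { coeff := fun n => if n < 0 then -f.coeff n else f.coeff n
      isPWO_support' := f.isPWO_support'.mono (by
        intro n hn
        simp only [Function.mem_support] at hn ⊢
        by_cases h : n < 0 <;> simp_all) }
  map_add' f g := by
    ext n
    by_cases h : n < 0 <;> simp [h] <;> ring
  map_smul' c f := by
    ext n
    by_cases h : n < 0 <;> simp [h]


section LSAux

/-- coefficient of a finite sum -/
lemma coeff_sum {ι : Type*} (s : Finset ι) (f : ι → LS) (n : ℤ) :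
    (∑ i ∈ s, f i).coeff n = ∑ i ∈ s, (f i).coeff n := by
  classical
  induction s using Finset.induction_on with
  | empty => simp
  | insert _ _ h ih => rw [Finset.sum_insert h, Finset.sum_insert h, HahnSeries.coeff_add, ih]

lemma mul_coeff_eq_zero' {a b : LS} {K L n : ℤ}
    (ha : ∀ i, i < K → a.coeff i = 0) (hb : ∀ j, j < L → b.coeff j = 0)
    (hn : n < K + L) : (a * b).coeff n = 0 := by
  rw [HahnSeries.coeff_mul]
  refine Finset.sum_eq_zero fun ij hij => ?_
  rw [Finset.mem_addAntidiagonal] at hij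
  obtain ⟨h1, h2, h3⟩ := hij
  by_cases hK : ij.1 < K
  · rw [ha _ hK, zero_mul]
  · by_cases hL : ij.2 < L
    · rw [hb _ hL, mul_zero]
    · exfalso; push_neg at hK hL; omega

lemma Aplus_mul {a b : LS} (ha : Aplus a) (hb : Aplus b) : Aplus (a * b) :=
  fun n hn => mul_coeff_eq_zero' (fun i h => ha i h) (fun j h => hb j h) (by omega)

lemma Aplus_add {a b : LS} (ha : Aplus a) (hb : Aplus b) : Aplus (a + b) := by
  intro n hn; rw [HahnSeries.coeff_add, ha n hn, hb n hn, add_zero]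

lemma Aplus_sum {ι : Type*} (s : Finset ι) (f : ι → LS) (h : ∀ i ∈ s, Aplus (f i)) :
    Aplus (∑ i ∈ s, f i) := by
  intro n hn; rw [coeff_sum]; exact Finset.sum_eq_zero fun i hi => h i hi n hn

lemma Aplus_one : Aplus (1 : LS) := by
  intro n hn
  rw [HahnSeries.coeff_one]
  simp only [ite_eq_right_iff]
  intro h; omega

lemma Aplus_smulC (c : ℂ) {a : LS} (ha : Aplus a) : Aplus (c • a) := by
  intro n hn; rw [HahnSeries.coeff_smul, ha n hn, smul_zero]

lemma expL_coeff_neg (c : ℂ) {n : ℤ} (hn : n < 0) : (expL c).coeff n = 0 := by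
  rw [expL, HahnSeries.ofPowerSeries_apply]
  apply HahnSeries.embDomain_notin_range
  rintro ⟨k, hk⟩
  have hk' : (k : ℤ) = n := hk
  omega

lemma expL_coeff_nat (c : ℂ) (k : ℕ) : (expL c).coeff (k : ℤ) = c ^ k / k.factorial := by
  rw [expL, HahnSeries.ofPowerSeries_apply_coeff, PowerSeries.coeff_mk]

lemma expL_zero : expL 0 = 1 := by
  have : (PowerSeries.mk fun k => (0:ℂ) ^ k / (k.factorial : ℂ)) = 1 := by
    ext k
    rw [PowerSeries.coeff_mk, PowerSeries.coeff_one]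
    rcases k with _ | k <;> simp
  rw [expL, this, map_one]

lemma single_mul_coeff (k : ℤ) (r : ℂ) (w : LS) (n : ℤ) :
    (HahnSeries.single k r * w).coeff n = r * w.coeff (n - k) := by
  have := HahnSeries.coeff_single_mul_add (r := r) (x := w) (a := n - k) (b := k)
  simpa using this

/-- truncated exponential -/
def truncE (c : ℂ) (K : ℕ) : LS :=
  ∑ k ∈ Finset.range K, HahnSeries.single (k : ℤ) (c ^ k / (k.factorial : ℂ))

lemma expL_sub_truncE (c : ℂ) (K : ℕ) : ∀ j : ℤ, j < (K : ℤ) →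
    (expL c - truncE c K).coeff j = 0 := by
  intro j hj
  rw [HahnSeries.coeff_sub, truncE, coeff_sum]
  by_cases hneg : j < 0
  · rw [expL_coeff_neg c hneg, Finset.sum_eq_zero, sub_zero]
    intro k _
    exact HahnSeries.coeff_single_of_ne (by omega)
  · push_neg at hneg
    lift j to ℕ using hneg
    rw [expL_coeff_nat, Finset.sum_eq_single j]
    · rw [HahnSeries.coeff_single_same, sub_self]
    · intro k _ hkj
      exact HahnSeries.coeff_single_of_ne (by exact_mod_cast fun h => hkj (by omega))
    · intro hj'
      exact absurd (Finset.mem_range.mpr (by omega)) hj'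

lemma coeff_expL_mul (c : ℂ) (w : LS) (n : ℤ) (L : ℤ)
    (hw : ∀ j, j < L → w.coeff j = 0) (K : ℕ) (hK : n < (K : ℤ) + L) :
    (expL c * w).coeff n
      = ∑ k ∈ Finset.range K, (c ^ k / (k.factorial : ℂ)) * w.coeff (n - k) := by
  have hsplit : expL c = truncE c K + (expL c - truncE c K) := by ring
  rw [hsplit, add_mul, HahnSeries.coeff_add,
    mul_coeff_eq_zero' (expL_sub_truncE c K) hw hK, add_zero, truncE, Finset.sum_mul,
    coeff_sum]
  exact Finset.sum_congr rfl fun k _ => single_mul_coeff _ _ _ _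

lemma hasDerivAt_coeff_expL_mul (c : ℂ) (w : LS) (n : ℤ) :
    HasDerivAt (fun t : ℂ => (expL (t * c) * w).coeff n) (c * w.coeff (n - 1)) 0 := by
  by_cases hw0 : w = 0
  · simp only [hw0, mul_zero, HahnSeries.coeff_zero, mul_zero]
    exact hasDerivAt_const 0 0
  have hL : ∀ j : ℤ, j < w.order → w.coeff j = 0 :=
    fun j hj => HahnSeries.coeff_eq_zero_of_lt_order hj
  set L := w.order with hLdef
  set K : ℕ := (max 2 (n - L + 1)).toNat with hKdef
  have hK2 : 2 ≤ K := by omega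
  have hKn : n < (K : ℤ) + L := by omega
  have heq : ∀ t : ℂ, (expL (t * c) * w).coeff n
      = ∑ k ∈ Finset.range K, ((t * c) ^ k / (k.factorial : ℂ)) * w.coeff (n - k) :=
    fun t => coeff_expL_mul _ w n L hL K hKn
  have hterm : ∀ k ∈ Finset.range K,
      HasDerivAt (fun t : ℂ => ((t * c) ^ k / (k.factorial : ℂ)) * w.coeff (n - k))
        ((if k = 1 then c else 0) * w.coeff (n - k)) 0 := by
    intro k _
    have h1 : HasDerivAt (fun t : ℂ => t * c) c 0 := hasDerivAt_mul_const c
    have h2 : HasDerivAt (fun t : ℂ => (t * c) ^ k)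
        ((k : ℂ) * ((0 : ℂ) * c) ^ (k - 1) * c) 0 := by
      have := (hasDerivAt_pow k ((0 : ℂ) * c)).comp 0 h1
      exact this
    have h3 := (h2.div_const (k.factorial : ℂ)).mul_const (w.coeff (n - k))
    refine h3.congr_deriv ?_
    rcases k with _ | _ | k <;> simp [Nat.factorial]
  have hsum := HasDerivAt.sum hterm
  have hval : ∑ k ∈ Finset.range K, (if k = 1 then c else 0) * w.coeff (n - k)
      = c * w.coeff (n - 1) := by
    rw [Finset.sum_eq_single 1]
    · norm_num
    · intro k _ h1; simp [h1]
    · intro h; exact absurd (Finset.mem_range.mpr (by omega)) h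
  rw [hval] at hsum
  exact hsum.congr_of_eventuallyEq (Filter.Eventually.of_forall fun t => by simp only [Finset.sum_apply]; exact heq t)

end LSAux

section ConvAux

open Coalgebra TensorProduct

variable {C : Type} [AddCommGroup C] [Module ℂ C] [Coalgebra ℂ C]

/-- generic convolution over any coalgebra -/
def convG (f g : C →ₗ[ℂ] LS) : C →ₗ[ℂ] LS :=
  LinearMap.mul' ℂ LS ∘ₗ TensorProduct.map f g ∘ₗ Coalgebra.comul

/-- generic counit-unit -/
def epsG : C →ₗ[ℂ] LS := LinearMap.toSpanSingleton ℂ LS 1 ∘ₗ Coalgebra.counit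

lemma epsG_apply (x : C) : epsG x = (Coalgebra.counit x : ℂ) • (1 : LS) := rfl

lemma convG_repr {ι : Type*} (f g : C →ₗ[ℂ] LS) {x : C} (r : Coalgebra.Repr ℂ x ι) :
    convG f g x = ∑ i ∈ r.index, f (r.left i) * g (r.right i) := by
  simp only [convG, LinearMap.comp_apply]
  rw [show Coalgebra.comul (R := ℂ) x = ∑ i ∈ r.index, r.left i ⊗ₜ[ℂ] r.right i from r.eq.symm,
    map_sum, map_sum]
  simp [TensorProduct.map_tmul, LinearMap.mul'_apply]

lemma convG_epsG_left (f : C →ₗ[ℂ] LS) : convG epsG f = f := by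
  refine LinearMap.ext fun x => ?_
  have r := Coalgebra.Repr.arbitrary ℂ x
  rw [convG_repr _ _ r]
  have h := Coalgebra.sum_counit_tmul_map_eq (R := ℂ) f x (repr := r)
  apply_fun (TensorProduct.lid ℂ LS) at h
  simp only [map_sum, TensorProduct.lid_tmul, one_smul] at h
  rw [← h]
  refine Finset.sum_congr rfl fun i _ => ?_
  rw [epsG_apply, smul_mul_assoc, one_mul]

lemma convG_epsG_right (f : C →ₗ[ℂ] LS) : convG f epsG = f := by
  refine LinearMap.ext fun x => ?_
  have r := Coalgebra.Repr.arbitrary ℂ x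
  rw [convG_repr _ _ r]
  have h := Coalgebra.sum_map_tmul_counit_eq (R := ℂ) f x (repr := r)
  apply_fun (TensorProduct.rid ℂ LS) at h
  simp only [map_sum, TensorProduct.rid_tmul, one_smul] at h
  rw [← h]
  refine Finset.sum_congr rfl fun i _ => ?_
  rw [epsG_apply]
  rw [mul_comm, smul_mul_assoc, one_mul]

lemma convG_assoc (f g h : C →ₗ[ℂ] LS) : convG (convG f g) h = convG f (convG g h) := by
  have hM : (LinearMap.mul' ℂ LS ∘ₗ
        TensorProduct.map f (LinearMap.mul' ℂ LS ∘ₗ TensorProduct.map g h)) ∘ₗ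
        (TensorProduct.assoc ℂ C C C).toLinearMap
      = LinearMap.mul' ℂ LS ∘ₗ
        TensorProduct.map (LinearMap.mul' ℂ LS ∘ₗ TensorProduct.map f g) h := by
    apply TensorProduct.ext_threefold
    intro a b c
    simp [mul_assoc]
  refine LinearMap.ext fun x => ?_
  have h1 : TensorProduct.map (convG f g) h
      = (TensorProduct.map (LinearMap.mul' ℂ LS ∘ₗ TensorProduct.map f g) h) ∘ₗ
        (Coalgebra.comul (R := ℂ) (A := C)).rTensor C := by
    rw [LinearMap.rTensor, ← TensorProduct.map_comp]
    rfl
  have h2 : TensorProduct.map f (convG g h)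
      = (TensorProduct.map f (LinearMap.mul' ℂ LS ∘ₗ TensorProduct.map g h)) ∘ₗ
        (Coalgebra.comul (R := ℂ) (A := C)).lTensor C := by
    rw [LinearMap.lTensor, ← TensorProduct.map_comp]
    rfl
  show (LinearMap.mul' ℂ LS) (TensorProduct.map (convG f g) h (Coalgebra.comul x))
      = (LinearMap.mul' ℂ LS) (TensorProduct.map f (convG g h) (Coalgebra.comul x))
  rw [h1, h2]
  simp only [LinearMap.comp_apply]
  rw [← Coalgebra.coassoc_apply]
  have := LinearMap.congr_fun hM ((Coalgebra.comul (R := ℂ) (A := C)).rTensor C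
    (Coalgebra.comul x))
  simp only [LinearMap.comp_apply, LinearEquiv.coe_coe] at this
  rw [this]

end ConvAux

section HopfAux

open Coalgebra TensorProduct

variable {H : Type} [Ring H] [HopfAlgebra ℂ H]

lemma conv_eq_convG (f g : H →ₗ[ℂ] LS) : conv f g = convG f g := rfl

lemma epsA_eq_epsG : (epsA : H →ₗ[ℂ] LS) = epsG := rfl

lemma conv_repr {ι : Type*} (f g : H →ₗ[ℂ] LS) {x : H} (r : Coalgebra.Repr ℂ x ι) :
    conv f g x = ∑ i ∈ r.index, f (r.left i) * g (r.right i) :=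
  convG_repr f g r

lemma conv_assoc (f g h : H →ₗ[ℂ] LS) : conv (conv f g) h = conv f (conv g h) :=
  convG_assoc f g h

lemma conv_epsA_left (f : H →ₗ[ℂ] LS) : conv epsA f = f := convG_epsG_left f

lemma conv_epsA_right (f : H →ₗ[ℂ] LS) : conv f epsA = f := convG_epsG_right f

lemma epsA_apply (x : H) : epsA x = (Coalgebra.counit x : ℂ) • (1 : LS) := rfl

/-- representation of `comul (x*y)` from representations of `x` and `y` -/
def mulRepr {ι κ : Type*} {x y : H} (rx : Coalgebra.Repr ℂ x ι) (ry : Coalgebra.Repr ℂ y κ) :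
    Coalgebra.Repr ℂ (x * y) (ι × κ) where
  index := rx.index ×ˢ ry.index
  left p := rx.left p.1 * ry.left p.2
  right p := rx.right p.1 * ry.right p.2
  eq := by
    rw [Finset.sum_product]
    show _ = Coalgebra.comul (R := ℂ) (x * y)
    rw [Bialgebra.comul_mul,
      show Coalgebra.comul (R := ℂ) x = ∑ i ∈ rx.index, rx.left i ⊗ₜ[ℂ] rx.right i from
        rx.eq.symm,
      show Coalgebra.comul (R := ℂ) y = ∑ j ∈ ry.index, ry.left j ⊗ₜ[ℂ] ry.right j from
        ry.eq.symm,
      Finset.sum_mul_sum]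
    simp [Algebra.TensorProduct.tmul_mul_tmul]

/-- representation of `comul (x ⊗ₜ y)` in the tensor coalgebra -/
def tmulRepr {ι κ : Type*} {x y : H} (rx : Coalgebra.Repr ℂ x ι) (ry : Coalgebra.Repr ℂ y κ) :
    Coalgebra.Repr ℂ (x ⊗ₜ[ℂ] y : H ⊗[ℂ] H) (ι × κ) where
  index := rx.index ×ˢ ry.index
  left p := rx.left p.1 ⊗ₜ[ℂ] ry.left p.2
  right p := rx.right p.1 ⊗ₜ[ℂ] ry.right p.2
  eq := by
    rw [Finset.sum_product]
    show _ = Coalgebra.comul (R := ℂ) (x ⊗ₜ[ℂ] y)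
    rw [TensorProduct.comul_def]
    simp only [LinearMap.comp_apply, TensorProduct.map_tmul, TensorProduct.AlgebraTensorModule.map_tmul]
    rw [← rx.eq, ← ry.eq, TensorProduct.sum_tmul, map_sum]
    refine Finset.sum_congr rfl fun i _ => ?_
    rw [TensorProduct.tmul_sum, map_sum]
    refine Finset.sum_congr rfl fun j _ => ?_
    simp [TensorProduct.tensorTensorTensorComm_tmul]

lemma charInv_apply (φ : H →ₗ[ℂ] LS) (x : H) :
    charInv φ x = φ (HopfAlgebra.antipode (R := ℂ) x) := rfl

lemma conv_charInv_self {φ : H →ₗ[ℂ] LS} (hφ : IsCharacter φ) :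
    conv (charInv φ) φ = epsA := by
  refine LinearMap.ext fun x => ?_
  have r := Coalgebra.Repr.arbitrary ℂ x
  rw [conv_repr _ _ r]
  have : ∀ i ∈ r.index, charInv φ (r.left i) * φ (r.right i)
      = φ (HopfAlgebra.antipode (R := ℂ) (r.left i) * r.right i) :=
    fun i _ => (hφ.2 _ _).symm
  rw [Finset.sum_congr rfl this, ← map_sum, HopfAlgebra.sum_antipode_mul_eq_smul r,
    map_smul, hφ.1, epsA_apply]

lemma conv_self_charInv {φ : H →ₗ[ℂ] LS} (hφ : IsCharacter φ) :
    conv φ (charInv φ) = epsA := by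
  refine LinearMap.ext fun x => ?_
  have r := Coalgebra.Repr.arbitrary ℂ x
  rw [conv_repr _ _ r]
  have : ∀ i ∈ r.index, φ (r.left i) * charInv φ (r.right i)
      = φ (r.left i * HopfAlgebra.antipode (R := ℂ) (r.right i)) :=
    fun i _ => (hφ.2 _ _).symm
  rw [Finset.sum_congr rfl this, ← map_sum, HopfAlgebra.sum_mul_antipode_eq_smul r,
    map_smul, hφ.1, epsA_apply]

/-- the antipode composed with a character is multiplicative (target is commutative) -/
lemma charInv_mul {φ : H →ₗ[ℂ] LS} (hφ : IsCharacter φ) (x y : H) :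
    charInv φ (x * y) = charInv φ x * charInv φ y := by
  set ψ := charInv φ with hψ
  set u : (H ⊗[ℂ] H) →ₗ[ℂ] LS := φ ∘ₗ LinearMap.mul' ℂ H with hu
  set v : (H ⊗[ℂ] H) →ₗ[ℂ] LS := LinearMap.mul' ℂ LS ∘ₗ TensorProduct.map ψ ψ with hv
  set w : (H ⊗[ℂ] H) →ₗ[ℂ] LS := ψ ∘ₗ LinearMap.mul' ℂ H with hw
  have hwu : convG w u = epsG := by
    apply TensorProduct.ext'
    intro a b
    have ra := Coalgebra.Repr.arbitrary ℂ a
    have rb := Coalgebra.Repr.arbitrary ℂ b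
    have htr := convG_repr w u (tmulRepr ra rb)
    simp only [tmulRepr] at htr
    have hrepr := conv_repr ψ φ (mulRepr ra rb)
    simp only [mulRepr] at hrepr
    rw [htr]
    have : ∀ p ∈ ra.index ×ˢ rb.index,
        w (ra.left p.1 ⊗ₜ[ℂ] rb.left p.2) * u (ra.right p.1 ⊗ₜ[ℂ] rb.right p.2)
        = ψ (ra.left p.1 * rb.left p.2) * φ (ra.right p.1 * rb.right p.2) := by
      intro p _
      simp only [hu, hw, LinearMap.comp_apply, LinearMap.mul'_apply]
    rw [Finset.sum_congr rfl this, ← hrepr, conv_charInv_self hφ]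
    rw [epsA_apply, epsG_apply, Bialgebra.counit_mul,
      TensorProduct.counit_def]
    simp [LinearMap.mul'_apply, mul_comm]
  have huv : convG u v = epsG := by
    apply TensorProduct.ext'
    intro a b
    have ra := Coalgebra.Repr.arbitrary ℂ a
    have rb := Coalgebra.Repr.arbitrary ℂ b
    have htr := convG_repr u v (tmulRepr ra rb)
    simp only [tmulRepr] at htr
    rw [htr]
    have : ∀ p ∈ ra.index ×ˢ rb.index,
        u (ra.left p.1 ⊗ₜ[ℂ] rb.left p.2) * v (ra.right p.1 ⊗ₜ[ℂ] rb.right p.2)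
        = (φ (ra.left p.1) * ψ (ra.right p.1)) * (φ (rb.left p.2) * ψ (rb.right p.2)) := by
      intro p _
      simp only [hu, hv, LinearMap.comp_apply, LinearMap.mul'_apply,
        TensorProduct.map_tmul, hφ.2]
      ring
    rw [Finset.sum_congr rfl this, Finset.sum_product]
    dsimp only
    rw [← Finset.sum_mul_sum,
      ← conv_repr φ ψ ra, ← conv_repr φ ψ rb, conv_self_charInv hφ]
    rw [epsA_apply, epsA_apply, epsG_apply, TensorProduct.counit_def]
    simp [LinearMap.mul'_apply, smul_smul, mul_comm]
  have hwv : w = v := by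
    calc w = convG w epsG := (convG_epsG_right w).symm
    _ = convG w (convG u v) := by rw [huv]
    _ = convG (convG w u) v := (convG_assoc w u v).symm
    _ = convG epsG v := by rw [hwu]
    _ = v := convG_epsG_left v
  have := LinearMap.congr_fun hwv (x ⊗ₜ[ℂ] y)
  simpa only [hw, hv, LinearMap.comp_apply, LinearMap.mul'_apply,
    TensorProduct.map_tmul] using this

end HopfAux

section GradedAux

open DirectSum

variable {H : Type} [Ring H] [HopfAlgebra ℂ H] (𝒜 : ℕ → Submodule ℂ H) [GradedAlgebra 𝒜]

local instance (i : ℕ) (x : 𝒜 i) : Decidable (x ≠ 0) := Classical.dec _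

lemma Ymap_apply' (x : H) :
    Ymap 𝒜 x = ∑ n ∈ (decompose 𝒜 x).support, (n : ℂ) • ((decompose 𝒜 x) n : H) := by
  rw [Ymap]
  simp only [LinearMap.comp_apply, LinearEquiv.coe_coe, decomposeLinearEquiv_apply,
    DFinsupp.lsum_apply_apply, DFinsupp.sumAddHom_apply]
  rw [DFinsupp.sum]
  refine Finset.sum_congr (by congr 1) fun m _ => rfl

lemma charScale_apply' (t : ℂ) (φ : H →ₗ[ℂ] LS) (x : H) :
    charScale 𝒜 t φ x = ∑ n ∈ (decompose 𝒜 x).support,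
      expL (t * (n : ℂ)) * φ ((decompose 𝒜 x) n) := by
  rw [charScale]
  simp only [LinearMap.comp_apply, LinearEquiv.coe_coe, decomposeLinearEquiv_apply,
    DFinsupp.lsum_apply_apply, DFinsupp.sumAddHom_apply]
  rw [DFinsupp.sum]
  refine Finset.sum_congr (by congr 1) fun m _ => ?_
  rw [LinearMap.toAddMonoidHom_coe, LinearMap.smul_apply, smul_eq_mul, LinearMap.comp_apply]
  rfl

lemma charScale_zero (φ : H →ₗ[ℂ] LS) : charScale 𝒜 0 φ = φ := by
  refine LinearMap.ext fun x => ?_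
  rw [charScale_apply']
  simp only [zero_mul, expL_zero, one_mul]
  rw [← map_sum]
  congr 1
  exact DirectSum.sum_support_decompose 𝒜 x

lemma Ymap_of_mem {n : ℕ} {x : H} (hx : x ∈ 𝒜 n) : Ymap 𝒜 x = (n : ℂ) • x := by
  rw [Ymap, LinearMap.comp_apply]
  change (DFinsupp.lsum ℕ fun k : ℕ => (((k : ℕ) : ℂ) • (𝒜 k).subtype)) (decompose 𝒜 x) = _
  rw [decompose_of_mem 𝒜 hx,
    show (DirectSum.of (fun i => (𝒜 i : Type)) n ⟨x, hx⟩ : ⨁ i, 𝒜 i)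
      = DFinsupp.single n ⟨x, hx⟩ from rfl, DFinsupp.lsum_single]
  rfl

lemma Ymap_mul (x y : H) : Ymap 𝒜 (x * y) = Ymap 𝒜 x * y + x * Ymap 𝒜 y := by
  have key : ∀ (i j : ℕ) (a : 𝒜 i) (b : 𝒜 j),
      Ymap 𝒜 ((a : H) * (b : H)) = Ymap 𝒜 (a : H) * b + (a : H) * Ymap 𝒜 (b : H) := by
    intro i j a b
    rw [Ymap_of_mem 𝒜 (SetLike.mul_mem_graded a.2 b.2), Ymap_of_mem 𝒜 a.2,
      Ymap_of_mem 𝒜 b.2, smul_mul_assoc, mul_smul_comm, ← add_smul]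
    push_cast
    ring_nf
  refine DirectSum.Decomposition.inductionOn 𝒜
    (motive := fun z => Ymap 𝒜 (z * y) = Ymap 𝒜 z * y + z * Ymap 𝒜 y) ?_ ?_ ?_ x
  · simp
  · intro i a
    refine DirectSum.Decomposition.inductionOn 𝒜
      (motive := fun z => Ymap 𝒜 ((a : H) * z) = Ymap 𝒜 (a : H) * z + (a : H) * Ymap 𝒜 z)
      ?_ ?_ ?_ y
    · simp
    · intro j b
      exact key i j a b
    · intro u v hu hv
      try simp only at hu hv ⊢
      rw [mul_add, map_add, hu, hv, map_add, mul_add, mul_add]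
      abel
  · intro u v hu hv
    try simp only at hu hv ⊢
    rw [add_mul, map_add, hu, hv, map_add, add_mul, add_mul]
    abel

lemma isInfChar_conv_Ymap {φ : H →ₗ[ℂ] LS} (hφ : IsCharacter φ) :
    IsInfChar (conv (charInv φ) (φ ∘ₗ Ymap 𝒜)) := by
  intro x y
  have rx := Coalgebra.Repr.arbitrary ℂ x
  have ry := Coalgebra.Repr.arbitrary ℂ y
  have hxy := conv_repr (charInv φ) (φ ∘ₗ Ymap 𝒜) (mulRepr rx ry)
  simp only [mulRepr] at hxy
  rw [hxy]
  have : ∀ p ∈ rx.index ×ˢ ry.index,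
      charInv φ (rx.left p.1 * ry.left p.2) * (φ ∘ₗ Ymap 𝒜) (rx.right p.1 * ry.right p.2)
      = (charInv φ (rx.left p.1) * (φ ∘ₗ Ymap 𝒜) (rx.right p.1))
          * (charInv φ (ry.left p.2) * φ (ry.right p.2))
        + (charInv φ (rx.left p.1) * φ (rx.right p.1))
          * (charInv φ (ry.left p.2) * (φ ∘ₗ Ymap 𝒜) (ry.right p.2)) := by
    intro p _
    simp only [LinearMap.comp_apply]
    rw [charInv_mul hφ, Ymap_mul 𝒜, map_add, hφ.2, hφ.2]
    ring
  rw [Finset.sum_congr rfl this, Finset.sum_add_distrib, Finset.sum_product,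
    Finset.sum_product]
  dsimp only
  rw [← Finset.sum_mul_sum, ← Finset.sum_mul_sum,
    ← conv_repr (charInv φ) (φ ∘ₗ Ymap 𝒜) rx, ← conv_repr (charInv φ) φ ry,
    ← conv_repr (charInv φ) φ rx, ← conv_repr (charInv φ) (φ ∘ₗ Ymap 𝒜) ry,
    conv_charInv_self hφ]

lemma conv_charScale_coeff_hasDerivAt (φ : H →ₗ[ℂ] LS) (x : H) (n : ℤ) :
    HasDerivAt (fun t : ℂ => ((conv (charInv φ) (charScale 𝒜 t φ)) x).coeff n)
      (((lam • conv (charInv φ) (φ ∘ₗ Ymap 𝒜)) x).coeff n) 0 := by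
  have r := Coalgebra.Repr.arbitrary ℂ x
  have heq : ∀ t : ℂ, ((conv (charInv φ) (charScale 𝒜 t φ)) x).coeff n
      = ∑ i ∈ r.index, ∑ m ∈ (decompose 𝒜 (r.right i)).support,
          (expL (t * (m : ℂ))
            * (charInv φ (r.left i) * φ ((decompose 𝒜 (r.right i)) m))).coeff n := by
    intro t
    rw [conv_repr _ _ r, coeff_sum]
    refine Finset.sum_congr rfl fun i _ => ?_
    rw [charScale_apply', Finset.mul_sum, coeff_sum]
    refine Finset.sum_congr rfl fun m _ => ?_
    congr 1
    ring
  have hB : ((lam • conv (charInv φ) (φ ∘ₗ Ymap 𝒜)) x).coeff n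
      = ∑ i ∈ r.index, ∑ m ∈ (decompose 𝒜 (r.right i)).support,
          (m : ℂ) * ((charInv φ (r.left i)
            * φ ((decompose 𝒜 (r.right i)) m)).coeff (n - 1)) := by
    rw [LinearMap.smul_apply, smul_eq_mul, lam, single_mul_coeff, one_mul,
      conv_repr _ _ r, coeff_sum]
    refine Finset.sum_congr rfl fun i _ => ?_
    rw [LinearMap.comp_apply, Ymap_apply' 𝒜, map_sum, Finset.mul_sum, coeff_sum]
    refine Finset.sum_congr rfl fun m _ => ?_
    rw [map_smul, mul_smul_comm, HahnSeries.coeff_smul, smul_eq_mul]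
  rw [hB]
  have hd := HasDerivAt.fun_sum (u := r.index) (x := (0:ℂ))
    (A := fun i t => ∑ m ∈ (decompose 𝒜 (r.right i)).support,
      (expL (t * (m : ℂ)) * (charInv φ (r.left i) * φ ((decompose 𝒜 (r.right i)) m))).coeff n)
    (A' := fun i => ∑ m ∈ (decompose 𝒜 (r.right i)).support,
      (m : ℂ) * ((charInv φ (r.left i) * φ ((decompose 𝒜 (r.right i)) m)).coeff (n - 1)))
    (fun i _ => HasDerivAt.fun_sum
      (fun m _ => hasDerivAt_coeff_expL_mul (m : ℂ)
        (charInv φ (r.left i) * φ ((decompose 𝒜 (r.right i)) m)) n))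
  exact hd.congr_of_eventuallyEq (Filter.Eventually.of_forall heq)

end GradedAux

/-- **Lemma.** For a local character `φ` of a graded connected Hopf algebra,
`tildeβ_φ(x) = (d/dt)|₀ (φ⁻¹ ⋆ φ^t)(x)` exists, is an infinitesimal character,
and is holomorphic: `tildeβ_φ(x) ∈ A₊ = ℂ[[λ]]` for every `x ∈ H`. -/
theorem tildeBeta_infChar_holomorphic
    {H : Type} [Ring H] [HopfAlgebra ℂ H]
    (𝒜 : ℕ → Submodule ℂ H) [GradedAlgebra 𝒜]
    (hconn : IsConnectedGrading 𝒜) (hΔ : ComulGraded 𝒜)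
    (hcounit : CounitGraded 𝒜) (hS : AntipodeGraded 𝒜)
    (φ : H →ₗ[ℂ] LS) (hloc : IsLocal 𝒜 φ) :
    ∃ B : H →ₗ[ℂ] LS, HasTildeBeta 𝒜 φ B ∧ IsInfChar B ∧ ∀ x, Aplus (B x) := by
  obtain ⟨hφ, φm, hBk⟩ := hloc
  -- every `φ⁻¹ ⋆ φᵗ` takes values in `A₊`
  have hGt : ∀ t : ℂ, ∀ x : H, Aplus ((conv (charInv φ) (charScale 𝒜 t φ)) x) := by
    obtain ⟨φp0, hb0⟩ := hBk 0
    obtain ⟨hφm, hφp0, hplus0, -, heq0⟩ := hb0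
    rw [charScale_zero] at heq0
    have hinvm : conv (charInv φm) φm = epsA := conv_charInv_self hφm
    have hminv : conv φm (charInv φm) = epsA := conv_self_charInv hφm
    have hφfac : φ = conv (charInv φm) φp0 := by
      rw [← heq0, ← conv_assoc, hinvm, conv_epsA_left]
    have hφQ : conv φ (conv (charInv φp0) φm) = epsA := by
      rw [hφfac, conv_assoc, ← conv_assoc φp0, conv_self_charInv hφp0, conv_epsA_left,
        hinvm]
    have hinvφ : charInv φ = conv (charInv φp0) φm := by
      calc charInv φ = conv (charInv φ) epsA := (conv_epsA_right _).symm
      _ = conv (charInv φ) (conv φ (conv (charInv φp0) φm)) := by rw [hφQ]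
      _ = conv (conv (charInv φ) φ) (conv (charInv φp0) φm) := (conv_assoc _ _ _).symm
      _ = conv epsA (conv (charInv φp0) φm) := by rw [conv_charInv_self hφ]
      _ = conv (charInv φp0) φm := conv_epsA_left _
    intro t x
    obtain ⟨φpt, hbt⟩ := hBk t
    obtain ⟨-, -, hplust, -, heqt⟩ := hbt
    have hscale : charScale 𝒜 t φ = conv (charInv φm) φpt := by
      rw [← heqt, ← conv_assoc, hinvm, conv_epsA_left]
    rw [hinvφ, hscale, conv_assoc, ← conv_assoc φm, hminv, conv_epsA_left]
    have r := Coalgebra.Repr.arbitrary ℂ x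
    rw [conv_repr _ _ r]
    exact Aplus_sum _ _ fun i _ => Aplus_mul (hplus0 _) (hplust _)
  refine ⟨lam • conv (charInv φ) (φ ∘ₗ Ymap 𝒜), ?_, ?_, ?_⟩
  · intro x n
    exact conv_charScale_coeff_hasDerivAt 𝒜 φ x n
  · intro x y
    have hZ := isInfChar_conv_Ymap 𝒜 hφ x y
    simp only [LinearMap.smul_apply, smul_eq_mul]
    rw [hZ]
    ring
  · intro x n hn
    have h1 := conv_charScale_coeff_hasDerivAt 𝒜 φ x n
    have h2 : HasDerivAt
        (fun t : ℂ => ((conv (charInv φ) (charScale 𝒜 t φ)) x).coeff n) 0 0 := by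
      have hfun : (fun t : ℂ => ((conv (charInv φ) (charScale 𝒜 t φ)) x).coeff n)
          = fun _ => 0 := funext fun t => hGt t x n hn
      rw [hfun]
      exact hasDerivAt_const 0 0
    exact h1.unique h2

end
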